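/- Let k be a positive integer with 1 ≤ k ≤ n/2, let D ⊆ F_2^n be an antipodal (2k+1)-design, and let C ⊆ D be a code containing exactly one point from each pair {x, −x} of antipodal points of D. Then C is a (k,k)-design in F_2^n. -/

import Mathlib

open Finset

/-- The Krawtchouk polynomials `Q_i^{(n)}(t)`, determined by `Q_0 = 1`, `Q_1 = t` and the
three-term recurrence `n·t·Q_i(t) = (n−i)·Q_{i+1}(t) + i·Q_{i−1}(t)`. -/
noncomputable def kraw (n : ℕ) : ℕ → ℝ → ℝ
  | 0, _ => 1
  | 1, t => t
  | (i+2), t =>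
      ((n : ℝ) * t * kraw n (i+1) t - ((i : ℝ) + 1) * kraw n i t) / ((n : ℝ) - ((i : ℝ) + 1))

/-- The "inner product" `⟨x,y⟩ = 1 − 2 d(x,y)/n`. -/
noncomputable def ip (n : ℕ) (x y : Fin n → ZMod 2) : ℝ :=
  1 - 2 * (hammingDist x y : ℝ) / (n : ℝ)

/-- The `i`-th moment `M_i(C) = ∑_{x,y ∈ C} Q_i^{(n)}(⟨x,y⟩)`. -/
noncomputable def moment (n : ℕ) (C : Finset (Fin n → ZMod 2)) (i : ℕ) : ℝ :=
  ∑ x ∈ C, ∑ y ∈ C, kraw n i (ip n x y)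

/-- The antipodal (complement) point `−x`. -/
def antip {n : ℕ} (x : Fin n → ZMod 2) : Fin n → ZMod 2 := fun j => x j + 1

/-- `C` is a `(k,k)`-design: a nonempty code with `M_i(C) = 0` for all even `i` with `2 ≤ i ≤ 2k`. -/
def IsKKDesign (n k : ℕ) (C : Finset (Fin n → ZMod 2)) : Prop :=
  C.Nonempty ∧ ∀ j : ℕ, 1 ≤ j → j ≤ k → moment n C (2 * j) = 0

/-- `C` is an `m`-design: a nonempty code with `M_i(C) = 0` for all `1 ≤ i ≤ m`. -/
def IsMDesign (n m : ℕ) (C : Finset (Fin n → ZMod 2)) : Prop :=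
  C.Nonempty ∧ ∀ i : ℕ, 1 ≤ i → i ≤ m → moment n C i = 0

/-- Generalized binomial coefficient `C(z,j)` for real `z`. -/
noncomputable def gchoose (z : ℝ) (j : ℕ) : ℝ :=
  (∏ i ∈ Finset.range j, (z - (i : ℝ))) / (Nat.factorial j : ℝ)

/-- The Krawtchouk polynomial `K_i^{(m)}(z)` in the variable `z`. -/
noncomputable def krawK (m i : ℕ) (z : ℝ) : ℝ :=
  ∑ j ∈ Finset.range (i + 1), (-1 : ℝ) ^ j * gchoose z j * gchoose ((m : ℝ) - z) (i - j)

/-- The adjacent polynomial `Q_i^{1,1}(t) = K_i^{(n−2)}(n(1−t)/2 − 1) / ∑_{j=0}^i C(n−1,j)`. -/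
noncomputable def Q11 (n i : ℕ) (t : ℝ) : ℝ :=
  krawK (n - 2) i ((n : ℝ) * (1 - t) / 2 - 1) /
    (∑ j ∈ Finset.range (i + 1), ((n - 1).choose j : ℝ))

lemma antip_antip {n : ℕ} (x : Fin n → ZMod 2) : antip (antip x) = x := by
  funext j
  show x j + 1 + 1 = x j
  rw [add_assoc]
  norm_num
  decide

lemma antip_inj {n : ℕ} : Function.Injective (antip (n := n)) := by
  intro a b h
  have := congrArg antip h
  rwa [antip_antip, antip_antip] at this

lemma hd_antip {n : ℕ} (x y : Fin n → ZMod 2) :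
    hammingDist x (antip y) + hammingDist x y = n := by
  classical
  have h : ∀ a b : ZMod 2, (a ≠ b + 1) ↔ ¬ (a ≠ b) := by decide
  simp only [hammingDist, antip]
  simp_rw [h]
  simpa using Finset.card_filter_add_card_filter_not
    (s := Finset.univ) (p := fun i => ¬ (x i ≠ y i))

lemma hd_antip_both {n : ℕ} (x y : Fin n → ZMod 2) :
    hammingDist (antip x) (antip y) = hammingDist x y := by
  classical
  have h : ∀ a b : ZMod 2, (a + 1 ≠ b + 1) ↔ (a ≠ b) := by decide
  simp only [hammingDist, antip]
  congr 1
  exact Finset.filter_congr (fun i _ => by exact h (x i) (y i))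

lemma ip_antip_right {n : ℕ} (hn : 0 < n) (x y : Fin n → ZMod 2) :
    ip n x (antip y) = - ip n x y := by
  have h := hd_antip x y
  have h' : (hammingDist x (antip y) : ℝ) = (n : ℝ) - (hammingDist x y : ℝ) := by
    have := congrArg (fun m : ℕ => (m : ℝ)) h
    push_cast at this
    linarith
  have hn' : (n : ℝ) ≠ 0 := Nat.cast_ne_zero.mpr hn.ne'
  simp only [ip, h']
  field_simp
  ring

lemma ip_antip_both {n : ℕ} (x y : Fin n → ZMod 2) :
    ip n (antip x) (antip y) = ip n x y := by
  simp [ip, hd_antip_both]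

lemma kraw_neg (n : ℕ) : ∀ i t, kraw n i (-t) = (-1 : ℝ) ^ i * kraw n i t := by
  intro i
  induction i using Nat.strong_induction_on with
  | _ i ih =>
    match i with
    | 0 => intro t; simp [kraw]
    | 1 => intro t; simp [kraw]
    | (i+2) =>
      intro t
      show ((n : ℝ) * (-t) * kraw n (i+1) (-t) - ((i : ℝ) + 1) * kraw n i (-t)) /
            ((n : ℝ) - ((i : ℝ) + 1)) =
          (-1 : ℝ) ^ (i+2) *
          (((n : ℝ) * t * kraw n (i+1) t - ((i : ℝ) + 1) * kraw n i t) /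
            ((n : ℝ) - ((i : ℝ) + 1)))
      rw [ih (i+1) (by omega), ih i (by omega), ← mul_div_assoc]
      congr 1
      ring

lemma ip_comm {n : ℕ} (x y : Fin n → ZMod 2) : ip n x y = ip n y x := by
  simp [ip, hammingDist_comm]

lemma ip_antip_left {n : ℕ} (hn : 0 < n) (x y : Fin n → ZMod 2) :
    ip n (antip x) y = - ip n x y := by
  rw [ip_comm, ip_antip_right hn, ip_comm]

/-- halving an antipodal `(2k+1)`-design yields a `(k,k)`-design. -/
theorem stmt_0 (n k : ℕ) (hn : 0 < n) (hk : 1 ≤ k) (hkn : 2 * k ≤ n)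
    (D C : Finset (Fin n → ZMod 2))
    (hDanti : ∀ x ∈ D, antip x ∈ D)
    (hD : IsMDesign n (2 * k + 1) D)
    (hCD : C ⊆ D)
    (hpair : ∀ x ∈ D, Xor' (x ∈ C) (antip x ∈ C)) :
    IsKKDesign n k C := by
  classical
  have hDeq : D = C ∪ C.image antip := by
    apply Finset.Subset.antisymm
    · intro x hx
      rcases hpair x hx with ⟨h1, _⟩ | ⟨h1, _⟩
      · exact Finset.mem_union_left _ h1
      · exact Finset.mem_union_right _ (Finset.mem_image.mpr ⟨antip x, h1, antip_antip x⟩)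
    · intro x hx
      rcases Finset.mem_union.mp hx with h | h
      · exact hCD h
      · rcases Finset.mem_image.mp h with ⟨y, hy, rfl⟩
        exact hDanti y (hCD hy)
  have hdisj : Disjoint C (C.image antip) := by
    rw [Finset.disjoint_left]
    intro x hxC hxI
    rcases Finset.mem_image.mp hxI with ⟨y, hyC, rfl⟩
    rcases hpair y (hCD hyC) with ⟨_, h2⟩ | ⟨_, h2⟩
    · exact h2 hxC
    · exact h2 hyC
  have hsum : ∀ g : (Fin n → ZMod 2) → ℝ,
      ∑ x ∈ D, g x = ∑ x ∈ C, g x + ∑ x ∈ C, g (antip x) := by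
    intro g
    rw [hDeq, Finset.sum_union hdisj,
      Finset.sum_image (fun a _ b _ h => antip_inj h)]
  have key : ∀ j : ℕ, moment n D (2 * j) = 4 * moment n C (2 * j) := by
    intro j
    have heven : ∀ t : ℝ, kraw n (2 * j) (-t) = kraw n (2 * j) t := by
      intro t
      rw [kraw_neg]
      simp [pow_mul]
    have inner : ∀ x, ∑ y ∈ D, kraw n (2 * j) (ip n x y)
        = 2 * ∑ y ∈ C, kraw n (2 * j) (ip n x y) := by
      intro x
      rw [hsum (fun y => kraw n (2 * j) (ip n x y))]
      have : (∑ y ∈ C, kraw n (2 * j) (ip n x (antip y)))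
          = ∑ y ∈ C, kraw n (2 * j) (ip n x y) :=
        Finset.sum_congr rfl (fun y _ => by rw [ip_antip_right hn, heven])
      rw [this]; ring
    have h1 : ∀ x, ∑ y ∈ D, kraw n (2 * j) (ip n (antip x) y)
        = ∑ y ∈ D, kraw n (2 * j) (ip n x y) :=
      fun x => Finset.sum_congr rfl (fun y _ => by rw [ip_antip_left hn, heven])
    unfold moment
    rw [hsum (fun x => ∑ y ∈ D, kraw n (2 * j) (ip n x y))]
    rw [Finset.sum_congr rfl (fun x _ => h1 x),
        Finset.sum_congr rfl (fun x _ => inner x), ← Finset.mul_sum]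
    ring
  constructor
  · obtain ⟨x, hx⟩ := hD.1
    rcases hpair x hx with ⟨h1, _⟩ | ⟨h1, _⟩
    · exact ⟨x, h1⟩
    · exact ⟨antip x, h1⟩
  · intro j hj1 hjk
    have hDz : moment n D (2 * j) = 0 := hD.2 (2 * j) (by omega) (by omega)
    have := key j
    rw [hDz] at this
    linarith
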